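/- Steering by right translation along a fixed axis: let ᾱ, λ̄, β̄ ∈ ℝ and set v = cos β̄ · e2 + sin β̄ · e3. Suppose q : [0,1] → ℍ is a differentiable solution of q'(s) = (u1(s) e1 + u2(s) e2)·q(s) with q(0) = 1 and q(1) = cos ᾱ + sin ᾱ · v. Then p(s) := q(s)·(cos λ̄ + sin λ̄ · v) is a solution of the same equation with the same controls, and satisfies p(0) = cos λ̄ + sin λ̄ · v and p(1) = cos(λ̄ + ᾱ) + sin(λ̄ + ᾱ) · v. -/

import Mathlib

open Quaternion Set

/-- The imaginary quaternion unit `i`. -/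
noncomputable def e1 : ℍ[ℝ] := ⟨0, 1, 0, 0⟩
/-- The imaginary quaternion unit `j`. -/
noncomputable def e2 : ℍ[ℝ] := ⟨0, 0, 1, 0⟩
/-- The imaginary quaternion unit `k`. -/
noncomputable def e3 : ℍ[ℝ] := ⟨0, 0, 0, 1⟩

/-- `qexp φ = exp (φ e1) = cos φ + (sin φ) e1`. -/
noncomputable def qexp (φ : ℝ) : ℍ[ℝ] :=
  (Real.cos φ : ℍ[ℝ]) + (Real.sin φ : ℍ[ℝ]) * e1

theorem stmt_19
    (αb lamb βb : ℝ)
    (v : ℍ[ℝ])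
    (hv : v = ((Real.cos βb : ℝ) : ℍ[ℝ]) * e2 + ((Real.sin βb : ℝ) : ℍ[ℝ]) * e3)
    (q : ℝ → ℍ[ℝ]) (u1 u2 : ℝ → ℝ)
    (hq : ∀ s ∈ Icc (0:ℝ) 1,
      HasDerivAt q ((((u1 s : ℝ) : ℍ[ℝ]) * e1 + ((u2 s : ℝ) : ℍ[ℝ]) * e2) * q s) s)
    (hq0 : q 0 = 1)
    (hq1 : q 1 = ((Real.cos αb : ℝ) : ℍ[ℝ]) + ((Real.sin αb : ℝ) : ℍ[ℝ]) * v) :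
    (∀ s ∈ Icc (0:ℝ) 1,
      HasDerivAt (fun s => q s * (((Real.cos lamb : ℝ) : ℍ[ℝ]) + ((Real.sin lamb : ℝ) : ℍ[ℝ]) * v))
        ((((u1 s : ℝ) : ℍ[ℝ]) * e1 + ((u2 s : ℝ) : ℍ[ℝ]) * e2) *
          (q s * (((Real.cos lamb : ℝ) : ℍ[ℝ]) + ((Real.sin lamb : ℝ) : ℍ[ℝ]) * v))) s) ∧
    q 0 * (((Real.cos lamb : ℝ) : ℍ[ℝ]) + ((Real.sin lamb : ℝ) : ℍ[ℝ]) * v) =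
      ((Real.cos lamb : ℝ) : ℍ[ℝ]) + ((Real.sin lamb : ℝ) : ℍ[ℝ]) * v ∧
    q 1 * (((Real.cos lamb : ℝ) : ℍ[ℝ]) + ((Real.sin lamb : ℝ) : ℍ[ℝ]) * v) =
      ((Real.cos (lamb + αb) : ℝ) : ℍ[ℝ]) + ((Real.sin (lamb + αb) : ℝ) : ℍ[ℝ]) * v := by

  refine ⟨fun s hs => ?_, ?_, ?_⟩
  · simpa [mul_assoc] using (hq s hs).mul_const _
  · simp [hq0]
  · rw [hq1, hv]
    have h2 : (⟨0,0,(Real.cos βb),(Real.sin βb)⟩ : ℍ[ℝ]) * ⟨0,0,(Real.cos βb),(Real.sin βb)⟩ = -1 := by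
      ext <;> simp <;>
      first
        | ring1
        | linear_combination (-(Real.sin αb * Real.sin lamb)) * Real.sin_sq_add_cos_sq βb
        | linear_combination (Real.sin αb * Real.sin lamb) * Real.sin_sq_add_cos_sq βb
        | linear_combination -Real.sin_sq_add_cos_sq βb
    have hvq : ((Real.cos βb : ℝ) : ℍ[ℝ]) * e2 + ((Real.sin βb : ℝ) : ℍ[ℝ]) * e3
        = (⟨0,0,(Real.cos βb),(Real.sin βb)⟩ : ℍ[ℝ]) := by
      ext <;> simp <;> simp [e2, e3]
    rw [hvq]
    rw [Real.cos_add, Real.sin_add]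
    push_cast
    ring_nf
    set w : ℍ[ℝ] := (⟨0,0,(Real.cos βb),(Real.sin βb)⟩ : ℍ[ℝ]) with hw
    ext <;> simp <;> simp [hw] <;>
      first
        | ring1
        | linear_combination (-(Real.sin αb * Real.sin lamb)) * Real.sin_sq_add_cos_sq βb
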